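/- arXiv:1706.04709 — 5 statements merged into one kernel-verified Lean document; each statement's English description precedes it below -/
import Mathlib

section
/- Let X be a finite set and μ: X × X → ℝ a function with μ(u,v) achieving its global minimum μ_min exactly when needed at u = v (i.e., μ(u,u) = μ_min for all u), and fix d > μ_min. Define M*(d) as the maximum cardinality of a subset C ⊆ X such that μ̃(u,v) := min(μ(u,v), μ(v,u)) ≥ d for all distinct u,v in C. Then for every probability distribution P on X, if X̂, X are i.i.d. with law P, Pr[μ̃(X̂, X) < d] ≥ 1/M*(d). -/
open Finset

private lemma base_case {X : Type*} [Fintype X] [DecidableEq X]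
    (E : X → X → Prop) [DecidableRel E] (ω : ℕ) (hω1 : 1 ≤ ω)
    (p : X → ℝ) (hp : ∀ x, 0 ≤ p x) (hp1 : ∑ x, p x = 1)
    (hcard : (Finset.univ.filter (fun x => p x ≠ 0)).card ≤ ω) :
    ∑ x, ∑ y, (if x ≠ y ∧ E x y then p x * p y else 0) ≤ 1 - 1 / (ω : ℝ) := by
  have hωpos : (0:ℝ) < ω := by exact_mod_cast hω1
  have h1 : ∑ x, ∑ y, (if x ≠ y ∧ E x y then p x * p y else 0)
      ≤ ∑ x, ∑ y, (if x ≠ y then p x * p y else 0) := by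
    refine Finset.sum_le_sum fun x _ => Finset.sum_le_sum fun y _ => ?_
    split_ifs with h1 h2 h2
    · exact le_refl _
    · exact absurd h1.1 h2
    · exact mul_nonneg (hp x) (hp y)
    · exact le_refl _
  have h2 : ∑ x, ∑ y, (if x ≠ y then p x * p y else 0) = 1 - ∑ x, p x * p x := by
    have hterm : ∀ x y : X, (if x ≠ y then p x * p y else 0)
        = p x * p y - (if x = y then p x * p y else 0) := by
      intro x y; by_cases h : x = y <;> simp [h]
    simp_rw [hterm, Finset.sum_sub_distrib, Finset.sum_ite_eq, Finset.mem_univ, if_true,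
      ← Finset.mul_sum, hp1, mul_one, hp1]
  have h3 : (1:ℝ) ≤ (ω : ℝ) * ∑ x, p x * p x := by
    set s := Finset.univ.filter (fun x => p x ≠ 0) with hs
    have hsum : ∑ x ∈ s, p x = 1 := by rw [hs, Finset.sum_filter_ne_zero, hp1]
    have hcs : (∑ x ∈ s, p x) ^ 2 ≤ (s.card : ℝ) * ∑ x ∈ s, p x ^ 2 :=
      sq_sum_le_card_mul_sum_sq
    rw [hsum, one_pow] at hcs
    have hsub : ∑ x ∈ s, p x ^ 2 ≤ ∑ x : X, p x ^ 2 :=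
      Finset.sum_le_sum_of_subset_of_nonneg (Finset.subset_univ s)
        (fun x _ _ => sq_nonneg _)
    have hc : (s.card : ℝ) ≤ (ω : ℝ) := by exact_mod_cast hcard
    have hnn : 0 ≤ ∑ x ∈ s, p x ^ 2 := Finset.sum_nonneg fun x _ => sq_nonneg _
    calc (1:ℝ) ≤ (s.card : ℝ) * ∑ x ∈ s, p x ^ 2 := hcs
      _ ≤ (ω : ℝ) * ∑ x ∈ s, p x ^ 2 := by nlinarith
      _ ≤ (ω : ℝ) * ∑ x : X, p x ^ 2 := by nlinarith
      _ = (ω : ℝ) * ∑ x : X, p x * p x := by simp_rw [sq]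
  have h4 : 1 / (ω : ℝ) ≤ ∑ x, p x * p x := by
    rw [div_le_iff₀ hωpos]; linarith [h3]
  rw [h2] at h1; linarith

private lemma key_lemma {X : Type*} [Fintype X] [DecidableEq X]
    (E : X → X → Prop) [DecidableRel E] (hsym : ∀ x y, E x y → E y x)
    (ω : ℕ) (hω1 : 1 ≤ ω)
    (hclique : ∀ C : Finset X, (∀ u ∈ C, ∀ v ∈ C, u ≠ v → E u v) → C.card ≤ ω) :
    ∀ n : ℕ, ∀ p : X → ℝ, (∀ x, 0 ≤ p x) → ∑ x, p x = 1 →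
      (Finset.univ.filter (fun x => p x ≠ 0)).card ≤ n →
      ∑ x, ∑ y, (if x ≠ y ∧ E x y then p x * p y else 0) ≤ 1 - 1 / (ω : ℝ) := by
  intro n
  induction n with
  | zero =>
    intro p hp hp1 hcard
    exfalso
    have : ∀ x : X, p x = 0 := by
      intro x
      by_contra hx
      have : x ∈ Finset.univ.filter (fun x => p x ≠ 0) := by simp [hx]
      have := Finset.card_pos.mpr ⟨x, this⟩
      omega
    simp [this] at hp1
  | succ n ih =>
    intro p hp hp1 hcard
    by_cases hbc : (Finset.univ.filter (fun x => p x ≠ 0)).card ≤ ω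
    · exact base_case E ω hω1 p hp hp1 hbc
    set s := Finset.univ.filter (fun x => p x ≠ 0) with hs
    have hnc : ¬ (∀ u ∈ s, ∀ v ∈ s, u ≠ v → E u v) := fun h => hbc (hclique s h)
    push_neg at hnc
    obtain ⟨i, hi, j, hj, hij, hEij⟩ := hnc
    have hEji : ¬ E j i := fun h => hEij (hsym _ _ h)
    have hpi : p i ≠ 0 := (Finset.mem_filter.mp hi).2
    have hpj : p j ≠ 0 := (Finset.mem_filter.mp hj).2
    have hpi' : 0 < p i := lt_of_le_of_ne (hp i) (Ne.symm hpi)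
    have hpj' : 0 < p j := lt_of_le_of_ne (hp j) (Ne.symm hpj)
    set e : X → ℝ := fun x => (if x = i then (1:ℝ) else 0) - (if x = j then (1:ℝ) else 0)
      with he
    set B : ℝ := ∑ x, ∑ y, ((if x ≠ y ∧ E x y then (1:ℝ) else 0) * e x * p y
        + (if x ≠ y ∧ E x y then (1:ℝ) else 0) * p x * e y) with hB
    set C : ℝ := ∑ x, ∑ y, (if x ≠ y ∧ E x y then (1:ℝ) else 0) * e x * e y with hC
    set t : ℝ := if 0 ≤ B then p j else -(p i) with ht
    set q : X → ℝ := fun x => p x + t * e x with hq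
    have hei : e i = 1 := by simp [he, hij]
    have hej : e j = -1 := by simp [he, Ne.symm hij]
    have hex : ∀ x, x ≠ i → x ≠ j → e x = 0 := by intro x h1 h2; simp [he, h1, h2]
    have sum_e : ∀ h : X → ℝ, ∑ x, e x * h x = h i - h j := by
      intro h
      simp only [he, sub_mul, ite_mul, one_mul, zero_mul, Finset.sum_sub_distrib,
        Finset.sum_ite_eq', Finset.mem_univ, if_true]
    have sume0 : ∑ x, e x = 0 := by
      have := sum_e (fun _ => 1)
      simpa using this
    have hC0 : C = 0 := by
      have h1 : C = ∑ x, e x * (∑ y, e y * (if x ≠ y ∧ E x y then (1:ℝ) else 0)) := by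
        rw [hC]
        refine Finset.sum_congr rfl fun x _ => ?_
        rw [Finset.mul_sum]
        exact Finset.sum_congr rfl fun y _ => by ring
      rw [h1, sum_e, sum_e, sum_e]
      simp [hij, Ne.symm hij, hEij, hEji]
    have expand : ∑ x, ∑ y, (if x ≠ y ∧ E x y then q x * q y else 0)
        = (∑ x, ∑ y, (if x ≠ y ∧ E x y then p x * p y else 0)) + t * B + t ^ 2 * C := by
      have hterm : ∀ x y : X, (if x ≠ y ∧ E x y then q x * q y else 0)
          = (if x ≠ y ∧ E x y then p x * p y else 0)
            + t * ((if x ≠ y ∧ E x y then (1:ℝ) else 0) * e x * p y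
                + (if x ≠ y ∧ E x y then (1:ℝ) else 0) * p x * e y)
            + t ^ 2 * ((if x ≠ y ∧ E x y then (1:ℝ) else 0) * e x * e y) := by
        intro x y
        by_cases h : x ≠ y ∧ E x y
        · simp only [if_pos h, hq]; ring
        · simp only [if_neg h]; ring
      simp_rw [hterm, Finset.sum_add_distrib, ← Finset.mul_sum]
      try rw [← hB, ← hC]
    have hqnn : ∀ x, 0 ≤ q x := by
      intro x
      by_cases hxi : x = i
      · subst hxi
        simp only [hq, hei, mul_one]
        rw [ht]; split_ifs with h
        · linarith
        · linarith
      by_cases hxj : x = j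
      · subst hxj
        simp only [hq, hej]
        rw [ht]; split_ifs with h
        · linarith
        · linarith
      · simp only [hq]; rw [hex x hxi hxj]; simpa using hp x
    have hqsum : ∑ x, q x = 1 := by
      simp only [hq]
      rw [Finset.sum_add_distrib, hp1, ← Finset.mul_sum, sume0, mul_zero, add_zero]
    have hqsupp : (Finset.univ.filter (fun x => q x ≠ 0)).card ≤ n := by
      set k : X := if 0 ≤ B then j else i with hk
      have hks : k ∈ s := by rw [hk]; split_ifs <;> assumption
      have hqk : q k = 0 := by
        simp only [hq]; rw [hk, ht]; split_ifs with h
        · rw [hej]; ring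
        · rw [hei]; ring
      have hsubset : Finset.univ.filter (fun x => q x ≠ 0) ⊆ s.erase k := by
        intro x hx
        have hqx : q x ≠ 0 := (Finset.mem_filter.mp hx).2
        have hxk : x ≠ k := fun h => hqx (h ▸ hqk)
        refine Finset.mem_erase.mpr ⟨hxk, ?_⟩
        by_cases hxi : x = i
        · subst hxi; exact hi
        by_cases hxj : x = j
        · subst hxj; exact hj
        · have : q x = p x := by simp only [hq]; rw [hex x hxi hxj]; ring
          rw [hs]
          exact Finset.mem_filter.mpr ⟨Finset.mem_univ _, this ▸ hqx⟩
      have h1 : (Finset.univ.filter (fun x => q x ≠ 0)).card ≤ (s.erase k).card :=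
        Finset.card_le_card hsubset
      have h2 : (s.erase k).card = s.card - 1 := Finset.card_erase_of_mem hks
      have h3 : s.card ≤ n + 1 := hcard
      have h4 : 1 ≤ s.card := Finset.card_pos.mpr ⟨k, hks⟩
      omega
    have htB : 0 ≤ t * B := by
      rw [ht]; split_ifs with h
      · exact mul_nonneg (le_of_lt hpj') h
      · have hB0 : B < 0 := not_le.mp h
        nlinarith
    calc ∑ x, ∑ y, (if x ≠ y ∧ E x y then p x * p y else 0)
        ≤ ∑ x, ∑ y, (if x ≠ y ∧ E x y then q x * q y else 0) := by
          rw [expand, hC0]; nlinarith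
      _ ≤ 1 - 1 / (ω : ℝ) := ih q hqnn hqsum hqsupp

theorem stmt_2 {X : Type*} [Fintype X] [Nonempty X] [DecidableEq X]
    (μ : X → X → ℝ)
    (hμ : ∀ u : X, μ u u = ⨅ ab : X × X, μ ab.1 ab.2)
    (d : ℝ) (hd : (⨅ ab : X × X, μ ab.1 ab.2) < d)
    (Mstar : ℕ)
    (hM : Mstar = sSup {m : ℕ | ∃ C : Finset X, C.card = m ∧
      ∀ u ∈ C, ∀ v ∈ C, u ≠ v → d ≤ min (μ u v) (μ v u)})
    (p : X → ℝ) (hp : ∀ x, 0 ≤ p x) (hp1 : ∑ x, p x = 1) :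
    (1 : ℝ) / Mstar ≤
      ∑ x : X, ∑ y : X, (if min (μ x y) (μ y x) < d then p x * p y else 0) := by
  classical
  set S : Set ℕ := {m : ℕ | ∃ C : Finset X, C.card = m ∧
      ∀ u ∈ C, ∀ v ∈ C, u ≠ v → d ≤ min (μ u v) (μ v u)} with hS
  have hbdd : BddAbove S := by
    refine ⟨Fintype.card X, fun m hm => ?_⟩
    obtain ⟨C, hC, _⟩ := hm
    rw [← hC]
    exact Finset.card_le_univ C
  have h1S : 1 ∈ S := by
    obtain ⟨x⟩ := ‹Nonempty X›
    exact ⟨{x}, Finset.card_singleton x, by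
      intro u hu v hv huv
      rw [Finset.mem_singleton] at hu hv
      exact absurd (hu.trans hv.symm) huv⟩
  have hω1 : 1 ≤ Mstar := hM ▸ le_csSup hbdd h1S
  have hclique : ∀ C : Finset X, (∀ u ∈ C, ∀ v ∈ C, u ≠ v → d ≤ min (μ u v) (μ v u)) →
      C.card ≤ Mstar := fun C hC => hM ▸ le_csSup hbdd ⟨C, rfl, hC⟩
  set E : X → X → Prop := fun x y => d ≤ min (μ x y) (μ y x) with hE
  have hsym : ∀ x y, E x y → E y x := by
    intro x y h; rw [hE] at *; rwa [min_comm]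
  have hdiag : ∀ x : X, min (μ x x) (μ x x) < d := by
    intro x; rw [min_self, hμ x]; exact hd
  have hkey := key_lemma E hsym Mstar hω1 hclique
      (Finset.univ.filter (fun x => p x ≠ 0)).card p hp hp1 le_rfl
  have hsplit : ∑ x : X, ∑ y : X, (if min (μ x y) (μ y x) < d then p x * p y else 0)
      = 1 - ∑ x, ∑ y, (if x ≠ y ∧ E x y then p x * p y else 0) := by
    have hterm : ∀ x y : X, (if min (μ x y) (μ y x) < d then p x * p y else 0)
        = p x * p y - (if x ≠ y ∧ E x y then p x * p y else 0) := by
      intro x y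
      by_cases hxy : x = y
      · subst hxy
        rw [if_pos (hdiag x), if_neg (by simp), sub_zero]
      by_cases hE' : E x y
      · have : ¬ min (μ x y) (μ y x) < d := not_lt.mpr hE'
        rw [if_neg this, if_pos ⟨hxy, hE'⟩]; ring
      · have : min (μ x y) (μ y x) < d := not_le.mp hE'
        rw [if_pos this, if_neg (fun h => hE' h.2), sub_zero]
    simp_rw [hterm, Finset.sum_sub_distrib, ← Finset.mul_sum, hp1, mul_one, hp1]
  rw [hsplit]
  have hωpos : (0:ℝ) < (Mstar : ℝ) := by exact_mod_cast hω1
  linarith [hkey]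
end

section
/- Let X be a finite set, μ and d as above, and M*(d) the maximal size of a distance-d code. Then M*(d) = 1 / min_{P} Pr[min(μ(X̂,X), μ(X,X̂)) < d], where the minimum is over all probability distributions P on X and X̂, X are i.i.d. with law P. -/
open Finset

lemma Q_expand {X : Type*} [Fintype X] (w : X → X → ℝ)
    (hsymm : ∀ x y, w x y = w y x) (p e : X → ℝ) (t : ℝ) :
    ∑ x, ∑ y, w x y * ((p x + t * e x) * (p y + t * e y))
      = (∑ x, ∑ y, w x y * (p x * p y))
        + t * (2 * ∑ x, ∑ y, w x y * (p x * e y))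
        + t ^ 2 * ∑ x, ∑ y, w x y * (e x * e y) := by
  have swap : ∑ x, ∑ y, w x y * (e x * p y) = ∑ x, ∑ y, w x y * (p x * e y) := by
    rw [Finset.sum_comm]
    exact Finset.sum_congr rfl fun x _ => Finset.sum_congr rfl fun y _ => by
      rw [hsymm]; ring
  have expand : ∀ x y : X, w x y * ((p x + t * e x) * (p y + t * e y))
      = w x y * (p x * p y) + t * (w x y * (p x * e y)) + t * (w x y * (e x * p y))
        + t ^ 2 * (w x y * (e x * e y)) := by intro x y; ring
  simp only [expand, Finset.sum_add_distrib, ← Finset.mul_sum]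
  rw [swap]; ring

lemma e_sum {X : Type*} [Fintype X] [DecidableEq X] (u v : X) (huv : u ≠ v) (g : X → ℝ) :
    ∑ x, ((if x = u then (1:ℝ) else 0) - (if x = v then 1 else 0)) * g x = g u - g v := by
  have : ∀ x, ((if x = u then (1:ℝ) else 0) - (if x = v then 1 else 0)) * g x
      = (if x = u then g x else 0) - (if x = v then g x else 0) := by
    intro x; split_ifs <;> ring
  simp only [this, Finset.sum_sub_distrib, Finset.sum_ite_eq' Finset.univ, Finset.mem_univ,
    if_true]

lemma MS_aux {X : Type*} [Fintype X] [DecidableEq X] (w : X → X → ℝ)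
    (hw01 : ∀ x y, w x y = 0 ∨ w x y = 1)
    (hsymm : ∀ x y, w x y = w y x)
    (hdiag : ∀ x, w x x = 1)
    (M : ℕ) (hMpos : 0 < M)
    (hM : ∀ C : Finset X, (∀ u ∈ C, ∀ v ∈ C, u ≠ v → w u v = 0) → C.card ≤ M) :
    ∀ n : ℕ, ∀ p : X → ℝ, (∀ x, 0 ≤ p x) → ∑ x, p x = 1 →
      (Finset.univ.filter (fun x => p x ≠ 0)).card ≤ n →
      1 / M ≤ ∑ x, ∑ y, w x y * (p x * p y) := by
  have hwnn : ∀ x y, 0 ≤ w x y := fun x y => by rcases hw01 x y with h | h <;> simp [h]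
  intro n
  induction n with
  | zero =>
    intro p hp hsum hcard
    exfalso
    have : ∀ x, p x = 0 := by
      intro x
      by_contra hx
      have : x ∈ Finset.univ.filter (fun x => p x ≠ 0) := by simp [hx]
      have := Finset.card_pos.mpr ⟨x, this⟩
      omega
    simp [this] at hsum
  | succ n ih =>
    intro p hp hsum hcard
    set S := Finset.univ.filter (fun x => p x ≠ 0) with hS
    have hmemS : ∀ x, x ∈ S ↔ p x ≠ 0 := fun x => by simp [hS]
    have hsumS : ∑ x ∈ S, p x = 1 := by
      rw [← hsum]
      exact Finset.sum_subset (Finset.subset_univ S) (fun x _ hx => by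
        by_contra h; exact hx ((hmemS x).mpr h))
    by_cases hind : ∀ u ∈ S, ∀ v ∈ S, u ≠ v → w u v = 0
    · -- support is a code; use Cauchy–Schwarz
      have hScard : S.card ≤ M := hM S hind
      have hSne : S.Nonempty := by
        rcases Finset.eq_empty_or_nonempty S with h | h
        · rw [h] at hsumS; simp at hsumS
        · exact h
      have hSpos : (0:ℝ) < S.card := by exact_mod_cast Finset.card_pos.mpr hSne
      have cs : (1:ℝ) ≤ S.card * ∑ x ∈ S, p x ^ 2 := by
        have := sq_sum_le_card_mul_sum_sq (s := S) (f := p)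
        rw [hsumS] at this; simpa using this
      have h1 : (1:ℝ) / S.card ≤ ∑ x ∈ S, p x ^ 2 := by
        rw [div_le_iff₀ hSpos]
        nlinarith [cs]
      have h2 : ∑ x ∈ S, p x ^ 2 ≤ ∑ x, ∑ y, w x y * (p x * p y) := by
        calc ∑ x ∈ S, p x ^ 2 ≤ ∑ x, p x ^ 2 :=
              Finset.sum_le_sum_of_subset_of_nonneg (Finset.subset_univ S)
                (fun x _ _ => sq_nonneg _)
          _ = ∑ x, w x x * (p x * p x) := by
              exact Finset.sum_congr rfl fun x _ => by rw [hdiag]; ring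
          _ ≤ ∑ x, ∑ y, w x y * (p x * p y) := by
              refine Finset.sum_le_sum fun x _ => ?_
              exact Finset.single_le_sum
                (fun y _ => mul_nonneg (hwnn x y) (mul_nonneg (hp x) (hp y)))
                (Finset.mem_univ x)
      have h3 : (1:ℝ) / M ≤ 1 / S.card := by
        apply one_div_le_one_div_of_le hSpos
        exact_mod_cast hScard
      linarith
    · -- there is a bad pair in the support; shift mass
      push_neg at hind
      obtain ⟨u, hu, v, hv, huv, hwuv⟩ := hind
      have hwuv1 : w u v = 1 := by
        rcases hw01 u v with h | h
        · exact absurd h hwuv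
        · exact h
      have hpu : 0 < p u := lt_of_le_of_ne (hp u) (Ne.symm ((hmemS u).mp hu))
      have hpv : 0 < p v := lt_of_le_of_ne (hp v) (Ne.symm ((hmemS v).mp hv))
      set e : X → ℝ := fun x => (if x = u then (1:ℝ) else 0) - (if x = v then 1 else 0) with he
      have heu : e u = 1 := by simp [he, huv]
      have hev : e v = -1 := by simp [he, Ne.symm huv]
      have hQe : ∑ x, ∑ y, w x y * (e x * e y) = 0 := by
        have inner : ∀ x, ∑ y, w x y * (e x * e y) = e x * (w x u - w x v) := by
          intro x
          have : ∀ y, w x y * (e x * e y) = e y * (e x * w x y) := fun y => by ring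
          simp only [this]
          rw [e_sum u v huv (fun y => e x * w x y)]
          ring
        simp only [inner]
        have : ∀ x, e x * (w x u - w x v) = e x * (fun x => w x u - w x v) x := fun x => rfl
        rw [Finset.sum_congr rfl fun x _ => this x, e_sum u v huv]
        rw [hdiag, hdiag, hwuv1, hsymm v u, hwuv1]; ring
      set c : ℝ := 2 * ∑ x, ∑ y, w x y * (p x * e y) with hc
      have key : ∀ t : ℝ, ∑ x, ∑ y, w x y * ((p x + t * e x) * (p y + t * e y))
          = (∑ x, ∑ y, w x y * (p x * p y)) + t * c := by
        intro t
        rw [Q_expand w hsymm p e t, hQe]; ring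
      -- choose direction
      have esum : ∑ x, e x = 0 := by
        simp [he, Finset.sum_sub_distrib]
      rcases le_or_gt c 0 with hcle | hcgt
      · -- use t = p v : kills coordinate v, Q decreases
        set q : X → ℝ := fun x => p x + p v * e x with hq
        have hqnn : ∀ x, 0 ≤ q x := by
          intro x
          by_cases hxu : x = u
          · rw [hxu]; simp [hq, heu]; linarith
          · by_cases hxv : x = v
            · rw [hxv]; simp [hq, hev]
            · simp [hq, he, hxu, hxv, hp x]
        have hqsum : ∑ x, q x = 1 := by
          simp only [hq, Finset.sum_add_distrib, ← Finset.mul_sum, esum, hsum, mul_zero, add_zero]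
        have hqsupp : Finset.univ.filter (fun x => q x ≠ 0) ⊆ S.erase v := by
          intro x hx
          simp only [Finset.mem_filter, Finset.mem_univ, true_and] at hx
          rw [Finset.mem_erase]
          constructor
          · rintro rfl; apply hx; simp [hq, hev]
          · rw [hmemS]
            by_cases hxu : x = u
            · rw [hxu]; exact (hmemS u).mp hu
            · by_cases hxv : x = v
              · rw [hxv]; exact (hmemS v).mp hv
              · intro h; apply hx; simp [hq, he, hxu, hxv, h]
        have hqcard : (Finset.univ.filter (fun x => q x ≠ 0)).card ≤ n := by
          have h1 := Finset.card_le_card hqsupp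
          have h2 : (S.erase v).card = S.card - 1 := Finset.card_erase_of_mem hv
          have h3 : 0 < S.card := Finset.card_pos.mpr ⟨v, hv⟩
          omega
        have := ih q hqnn hqsum hqcard
        have hQq : ∑ x, ∑ y, w x y * (q x * q y)
            = (∑ x, ∑ y, w x y * (p x * p y)) + p v * c := key (p v)
        rw [hQq] at this
        nlinarith
      · -- use t = -(p u) : kills coordinate u
        set q : X → ℝ := fun x => p x + (-(p u)) * e x with hq
        have hqnn : ∀ x, 0 ≤ q x := by
          intro x
          by_cases hxu : x = u
          · rw [hxu]; simp [hq, heu]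
          · by_cases hxv : x = v
            · rw [hxv]; simp [hq, hev]; linarith
            · simp [hq, he, hxu, hxv, hp x]
        have hqsum : ∑ x, q x = 1 := by
          simp only [hq, Finset.sum_add_distrib, ← Finset.mul_sum, esum, hsum, mul_zero, add_zero]
        have hqsupp : Finset.univ.filter (fun x => q x ≠ 0) ⊆ S.erase u := by
          intro x hx
          simp only [Finset.mem_filter, Finset.mem_univ, true_and] at hx
          rw [Finset.mem_erase]
          constructor
          · rintro rfl; apply hx; simp [hq, heu]
          · rw [hmemS]
            by_cases hxu : x = u
            · rw [hxu]; exact (hmemS u).mp hu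
            · by_cases hxv : x = v
              · rw [hxv]; exact (hmemS v).mp hv
              · intro h; apply hx; simp [hq, he, hxu, hxv, h]
        have hqcard : (Finset.univ.filter (fun x => q x ≠ 0)).card ≤ n := by
          have h1 := Finset.card_le_card hqsupp
          have h2 : (S.erase u).card = S.card - 1 := Finset.card_erase_of_mem hu
          have h3 : 0 < S.card := Finset.card_pos.mpr ⟨u, hu⟩
          omega
        have := ih q hqnn hqsum hqcard
        have hQq : ∑ x, ∑ y, w x y * (q x * q y)
            = (∑ x, ∑ y, w x y * (p x * p y)) + (-(p u)) * c := key (-(p u))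
        rw [hQq] at this
        nlinarith

theorem stmt_3 {X : Type*} [Fintype X] [Nonempty X] [DecidableEq X]
    (μ : X → X → ℝ)
    (hμ : ∀ u : X, μ u u = ⨅ ab : X × X, μ ab.1 ab.2)
    (d : ℝ) (hd : (⨅ ab : X × X, μ ab.1 ab.2) < d)
    (Mstar : ℕ)
    (hM : Mstar = sSup {m : ℕ | ∃ C : Finset X, C.card = m ∧
      ∀ u ∈ C, ∀ v ∈ C, u ≠ v → d ≤ min (μ u v) (μ v u)}) :
    (Mstar : ℝ) =
      1 / sInf {q : ℝ | ∃ p : X → ℝ, (∀ x, 0 ≤ p x) ∧ (∑ x, p x = 1) ∧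
        q = ∑ x : X, ∑ y : X, (if min (μ x y) (μ y x) < d then p x * p y else 0)} := by
  classical
  set A : Set ℕ := {m : ℕ | ∃ C : Finset X, C.card = m ∧
      ∀ u ∈ C, ∀ v ∈ C, u ≠ v → d ≤ min (μ u v) (μ v u)} with hA
  have hbddA : BddAbove A := by
    refine ⟨Fintype.card X, fun m hm => ?_⟩
    obtain ⟨C, hC, -⟩ := hm
    rw [← hC]; exact Finset.card_le_univ C
  have h1A : 1 ∈ A := by
    refine ⟨{Classical.arbitrary X}, Finset.card_singleton _, ?_⟩
    intro u hu v hv huv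
    simp only [Finset.mem_singleton] at hu hv
    exact absurd (hu.trans hv.symm) huv
  have hMmem : Mstar ∈ A := by rw [hM]; exact Nat.sSup_mem ⟨1, h1A⟩ hbddA
  have hMub : ∀ C : Finset X, (∀ u ∈ C, ∀ v ∈ C, u ≠ v → d ≤ min (μ u v) (μ v u)) →
      C.card ≤ Mstar := by
    intro C hC; rw [hM]; exact le_csSup hbddA ⟨C, rfl, hC⟩
  have hM1 : 1 ≤ Mstar := by rw [hM]; exact le_csSup hbddA h1A
  have hMpos : (0:ℝ) < (Mstar:ℝ) := by exact_mod_cast hM1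
  have hdxx : ∀ x : X, min (μ x x) (μ x x) < d := by
    intro x; rw [min_self, hμ x]; exact hd
  obtain ⟨C, hCcard, hCcode⟩ := hMmem
  set w : X → X → ℝ := fun x y => if min (μ x y) (μ y x) < d then 1 else 0 with hw
  have hw01 : ∀ x y, w x y = 0 ∨ w x y = 1 := by
    intro x y; simp only [hw]; split_ifs <;> simp
  have hsymm : ∀ x y, w x y = w y x := by
    intro x y; simp only [hw, min_comm (μ x y) (μ y x)]
  have hdiag : ∀ x, w x x = 1 := by
    intro x; simp only [hw, if_pos (hdxx x)]
  set Sset : Set ℝ := {q : ℝ | ∃ p : X → ℝ, (∀ x, 0 ≤ p x) ∧ (∑ x, p x = 1) ∧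
      q = ∑ x : X, ∑ y : X, (if min (μ x y) (μ y x) < d then p x * p y else 0)} with hSset
  -- the uniform distribution on C witnesses 1/Mstar ∈ Sset
  have hmem : (1:ℝ) / Mstar ∈ Sset := by
    refine ⟨fun x => if x ∈ C then ((Mstar:ℝ))⁻¹ else 0, ?_, ?_, ?_⟩
    · intro x
      simp only []
      split_ifs
      · positivity
      · exact le_refl 0
    · simp only []
      rw [Finset.sum_ite_mem, Finset.univ_inter, Finset.sum_const, hCcard, nsmul_eq_mul]
      field_simp
    · have point : ∀ x y : X, (if min (μ x y) (μ y x) < d then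
          (if x ∈ C then ((Mstar:ℝ))⁻¹ else 0) * (if y ∈ C then ((Mstar:ℝ))⁻¹ else 0) else 0)
          = if y = x then (if x ∈ C then ((Mstar:ℝ))⁻¹ * (Mstar:ℝ)⁻¹ else 0) else 0 := by
        intro x y
        by_cases hxy : y = x
        · subst hxy
          rw [if_pos (hdxx y), if_pos rfl]
          split_ifs <;> simp
        · rw [if_neg hxy]
          by_cases hxC : x ∈ C
          · by_cases hyC : y ∈ C
            · rw [if_neg (not_lt.mpr (hCcode x hxC y hyC (fun h => hxy h.symm)))]
            · simp [hyC]
          · simp [hxC]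
      simp only [point, Finset.sum_ite_eq' Finset.univ, Finset.mem_univ, if_true]
      rw [Finset.sum_ite_mem, Finset.univ_inter, Finset.sum_const, hCcard, nsmul_eq_mul]
      field_simp
  have hlb : ∀ q ∈ Sset, (1:ℝ) / Mstar ≤ q := by
    rintro q ⟨p, hp, hsum, rfl⟩
    have conv : ∑ x : X, ∑ y : X, (if min (μ x y) (μ y x) < d then p x * p y else 0)
        = ∑ x, ∑ y, w x y * (p x * p y) := by
      refine Finset.sum_congr rfl fun x _ => Finset.sum_congr rfl fun y _ => ?_
      simp only [hw]; split_ifs <;> ring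
    rw [conv]
    refine MS_aux w hw01 hsymm hdiag Mstar hM1 ?_ (Fintype.card X) p hp hsum ?_
    · intro C' hC'
      refine hMub C' fun u hu v hv huv => ?_
      have := hC' u hu v hv huv
      simp only [hw] at this
      by_contra h
      rw [if_pos (not_le.mp h)] at this
      exact one_ne_zero this
    · exact Finset.card_le_univ _
  have hinf : sInf Sset = 1 / Mstar :=
    le_antisymm (csInf_le ⟨1 / Mstar, hlb⟩ hmem) (le_csInf ⟨_, hmem⟩ hlb)
  rw [hinf, one_div_one_div]
end

section
/- (Gilbert–Varshamov bound via distance spectrum) For a finite alphabet of size Q, Hamming distance μ, and 1 ≤ d ≤ n, the maximal size M*_n(d) of a length-n code with minimum pairwise Hamming distance at least d satisfies M*_n(d) ≥ Q^n / (\sum_{i=0}^{d-1} \binom{n}{i} (Q-1)^i). -/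
open Finset

lemma fiber_card {α : Type*} [Fintype α] [DecidableEq α] {n : ℕ} (x : Fin n → α)
    (S : Finset (Fin n)) :
    (Finset.univ.filter fun y : Fin n → α =>
      (Finset.univ.filter fun i => x i ≠ y i) = S).card
      = (Fintype.card α - 1) ^ S.card := by
  have h1 : (Finset.univ.filter fun y : Fin n → α =>
      (Finset.univ.filter fun i => x i ≠ y i) = S)
      = Fintype.piFinset (fun j => if j ∈ S then {x j}ᶜ else {x j}) := by
    ext y
    simp only [mem_filter, mem_univ, true_and, Fintype.mem_piFinset, Finset.ext_iff,
      mem_filter, mem_univ, true_and]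
    constructor
    · intro h j
      by_cases hj : j ∈ S
      · simpa [hj, eq_comm] using ((h j).mpr hj)
      · have : ¬ x j ≠ y j := fun hne => hj ((h j).mp hne)
        simp [hj, not_not.mp this]
    · intro h j
      have := h j
      by_cases hj : j ∈ S <;> simp [hj, eq_comm] at this ⊢ <;> tauto
  rw [h1, Fintype.card_piFinset]
  have h2 : ∀ j : Fin n, (if j ∈ S then ({x j}ᶜ : Finset α) else {x j}).card
      = if j ∈ S then Fintype.card α - 1 else 1 := by
    intro j; split <;> simp [Finset.card_compl]
  simp_rw [h2]
  rw [Finset.prod_ite_mem, Finset.univ_inter, Finset.prod_const]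

lemma ball_card {α : Type*} [Fintype α] [DecidableEq α] {n : ℕ} (r : ℕ) (x : Fin n → α) :
    (Finset.univ.filter fun y : Fin n → α => hammingDist x y ≤ r).card
      = ∑ i ∈ Finset.range (r + 1), n.choose i * (Fintype.card α - 1) ^ i := by
  have hdist : ∀ y : Fin n → α,
      hammingDist x y = (Finset.univ.filter fun i => x i ≠ y i).card := fun y => rfl
  have hmap : ∀ y ∈ (Finset.univ.filter fun y : Fin n → α => hammingDist x y ≤ r),
      (Finset.univ.filter fun i => x i ≠ y i)
        ∈ (Finset.univ : Finset (Finset (Fin n))).filter fun S => S.card ≤ r := by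
    intro y hy
    simp only [mem_filter, mem_univ, true_and] at hy ⊢
    rwa [← hdist]
  rw [Finset.card_eq_sum_card_fiberwise hmap]
  have step : ∀ S ∈ (Finset.univ : Finset (Finset (Fin n))).filter fun S => S.card ≤ r,
      (((Finset.univ.filter fun y : Fin n → α => hammingDist x y ≤ r)).filter
        (fun y => (Finset.univ.filter fun i => x i ≠ y i) = S)).card
      = (Fintype.card α - 1) ^ S.card := by
    intro S hS
    have he : ((Finset.univ.filter fun y : Fin n → α => hammingDist x y ≤ r)).filter
        (fun y => (Finset.univ.filter fun i => x i ≠ y i) = S)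
        = Finset.univ.filter fun y : Fin n → α =>
            (Finset.univ.filter fun i => x i ≠ y i) = S := by
      ext y
      simp only [mem_filter, mem_univ, true_and, and_iff_right_iff_imp]
      intro h
      rw [hdist, h]
      exact (mem_filter.mp hS).2
    rw [he, fiber_card]
  rw [Finset.sum_congr rfl step]
  have hmap2 : ∀ S ∈ (Finset.univ : Finset (Finset (Fin n))).filter fun S => S.card ≤ r,
      S.card ∈ Finset.range (r + 1) := by
    intro S hS
    simp [Nat.lt_succ_iff, (Finset.mem_filter.mp hS).2]
  rw [← Finset.sum_fiberwise_of_maps_to hmap2 (fun S => (Fintype.card α - 1) ^ S.card)]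
  refine Finset.sum_congr rfl fun i hi => ?_
  have hfib : ((Finset.univ : Finset (Finset (Fin n))).filter fun S => S.card ≤ r).filter
      (fun S => S.card = i) = Finset.powersetCard i Finset.univ := by
    ext S
    simp only [mem_filter, mem_univ, true_and, Finset.mem_powersetCard_univ]
    exact ⟨fun h => h.2, fun h => ⟨h ▸ Nat.lt_succ_iff.mp (Finset.mem_range.mp hi), h⟩⟩
  rw [hfib]
  rw [Finset.sum_congr rfl (fun S hS =>
    by rw [Finset.mem_powersetCard_univ.mp hS] : ∀ S ∈ Finset.powersetCard i Finset.univ,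
      (Fintype.card α - 1) ^ S.card = (Fintype.card α - 1) ^ i)]
  rw [Finset.sum_const, Finset.card_powersetCard, Finset.card_univ, Fintype.card_fin,
    smul_eq_mul]

theorem stmt_5 {α : Type*} [Fintype α] [DecidableEq α]
    (Q n d : ℕ) (hQ : Fintype.card α = Q) (hQ2 : 2 ≤ Q)
    (hn : 1 ≤ n) (hd1 : 1 ≤ d) :
    ∃ C : Finset (Fin n → α),
      (∀ u ∈ C, ∀ v ∈ C, u ≠ v → d ≤ hammingDist u v) ∧
      (Q : ℝ) ^ n / (∑ i ∈ Finset.range d, (n.choose i : ℝ) * (Q - 1) ^ i)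
        ≤ (C.card : ℝ) := by
  classical
  -- pick a maximum-cardinality code
  set P : Finset (Fin n → α) → Prop :=
    fun C => ∀ u ∈ C, ∀ v ∈ C, u ≠ v → d ≤ hammingDist u v with hP
  have hne : ((Finset.univ : Finset (Finset (Fin n → α))).filter fun C => P C).Nonempty :=
    ⟨∅, by simp [P]⟩
  obtain ⟨C, hCmem, hCmax⟩ := Finset.exists_max_image _ Finset.card hne
  have hCP : P C := (Finset.mem_filter.mp hCmem).2
  refine ⟨C, hCP, ?_⟩
  -- covering property
  have hcover : ∀ y : Fin n → α, ∃ c ∈ C, hammingDist c y ≤ d - 1 := by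
    intro y
    by_contra h
    push_neg at h
    have hy : y ∉ C := fun hy => by have := h y hy; simp only [hammingDist_self] at this; omega
    have hins : P (insert y C) := by
      intro u hu v hv huv
      rcases Finset.mem_insert.mp hu with hu' | hu' <;>
        rcases Finset.mem_insert.mp hv with hv' | hv'
      · exact absurd (hu'.trans hv'.symm) huv
      · subst hu'
        have := h v hv'
        rw [hammingDist_comm]
        omega
      · subst hv'
        have := h u hu'
        omega
      · exact hCP u hu' v hv' huv
    have := hCmax (insert y C) (Finset.mem_filter.mpr ⟨Finset.mem_univ _, hins⟩)
    rw [Finset.card_insert_of_notMem hy] at this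
    omega
  -- counting
  have hsub : (Finset.univ : Finset (Fin n → α)) ⊆
      C.biUnion fun c => Finset.univ.filter fun y => hammingDist c y ≤ d - 1 := by
    intro y _
    obtain ⟨c, hc, hcy⟩ := hcover y
    exact Finset.mem_biUnion.mpr ⟨c, hc, Finset.mem_filter.mpr ⟨Finset.mem_univ _, hcy⟩⟩
  have hcount : Q ^ n ≤ C.card * ∑ i ∈ Finset.range d, n.choose i * (Q - 1) ^ i := by
    calc Q ^ n = (Finset.univ : Finset (Fin n → α)).card := by
          rw [Finset.card_univ]
          simp [hQ]
      _ ≤ (C.biUnion fun c => Finset.univ.filter fun y => hammingDist c y ≤ d - 1).card :=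
          Finset.card_le_card hsub
      _ ≤ ∑ c ∈ C, (Finset.univ.filter fun y => hammingDist c y ≤ d - 1).card :=
          Finset.card_biUnion_le
      _ = ∑ c ∈ C, ∑ i ∈ Finset.range d, n.choose i * (Q - 1) ^ i := by
          refine Finset.sum_congr rfl fun c _ => ?_
          rw [ball_card, hQ, show d - 1 + 1 = d from by omega]
      _ = C.card * ∑ i ∈ Finset.range d, n.choose i * (Q - 1) ^ i := by
          rw [Finset.sum_const, smul_eq_mul]
  -- pass to ℝ
  have hcast : (∑ i ∈ Finset.range d, (n.choose i : ℝ) * (Q - 1) ^ i)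
      = ((∑ i ∈ Finset.range d, n.choose i * (Q - 1) ^ i : ℕ) : ℝ) := by
    push_cast [Nat.cast_sub (by omega : 1 ≤ Q)]
    ring_nf
  have hpos : (0 : ℝ) < ∑ i ∈ Finset.range d, (n.choose i : ℝ) * (Q - 1) ^ i := by
    rw [hcast]
    have : 0 < ∑ i ∈ Finset.range d, n.choose i * (Q - 1) ^ i := by
      apply Finset.sum_pos'
      · intros; positivity
      · exact ⟨0, Finset.mem_range.mpr (by omega), by simp⟩
    exact_mod_cast this
  rw [div_le_iff₀ hpos, hcast]
  calc ((Q : ℝ)) ^ n = ((Q ^ n : ℕ) : ℝ) := by push_cast; ring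
    _ ≤ ((C.card * ∑ i ∈ Finset.range d, n.choose i * (Q - 1) ^ i : ℕ) : ℝ) := by
        exact_mod_cast hcount
    _ = _ := by push_cast; ring
end

section
/- For the torus distance μ(x̂², x²) = \sum_{i=1}^2 min(1 − |x̂_i − x_i|, |x̂_i − x_i|) on [0,1)², and d = 1/k with integer k ≥ 2, the maximal size of a code with pairwise distance at least 1/k is exactly 2k². -/
lemma distZ_le (t : ℝ) (ht : |t| < 1) (r : ℤ) : min (1 - |t|) |t| ≤ |t - r| := by
  rcases lt_trichotomy r 0 with h | h | h
  · have hr : (r : ℝ) ≤ -1 := by exact_mod_cast (by omega : r ≤ -1)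
    have : 1 - |t| ≤ |t - r| := by
      rcases abs_cases t with ⟨h1, h2⟩ | ⟨h1, h2⟩ <;> rcases abs_cases (t - r) with ⟨h3,_⟩|⟨h3,_⟩ <;> linarith
    exact le_trans (min_le_left _ _) this
  · subst h; simpa using min_le_right _ _
  · have hr : (1:ℝ) ≤ r := by exact_mod_cast h
    have : 1 - |t| ≤ |t - r| := by
      rcases abs_cases t with ⟨h1, h2⟩ | ⟨h1, h2⟩ <;> rcases abs_cases (t - r) with ⟨h3,_⟩|⟨h3,_⟩ <;> linarith
    exact le_trans (min_le_left _ _) this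

lemma bound_nonneg (k : ℕ) (hk : 1 ≤ k) (m : ℤ) (h : |m| ≤ 2*k - 1) :
    (0:ℝ) ≤ min (1 - |(m:ℝ)/(2*k)|) |(m:ℝ)/(2*k)| := by
  have hk0 : (0:ℝ) < k := by exact_mod_cast hk
  have hM : |(m:ℝ)| ≤ 2*k - 1 := by
    have h' : ((|m| : ℤ) : ℝ) ≤ ((2*(k:ℤ) - 1 : ℤ) : ℝ) := by exact_mod_cast h
    push_cast at h'; linarith
  refine le_min ?_ (abs_nonneg _)
  rw [abs_div, abs_of_pos (by linarith : (0:ℝ) < 2*k)]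
  rw [sub_nonneg, div_le_one (by linarith)]
  linarith

lemma bound_even (k : ℕ) (hk : 1 ≤ k) (m : ℤ) (hm : m ≠ 0) (hme : 2 ∣ m) (h : |m| ≤ 2*k - 1) :
    (1:ℝ)/k ≤ min (1 - |(m:ℝ)/(2*k)|) |(m:ℝ)/(2*k)| := by
  obtain ⟨j, rfl⟩ := hme
  have hk0 : (0:ℝ) < k := by exact_mod_cast hk
  have h2k : (0:ℝ) < 2*k := by linarith
  have h2 : (2:ℤ) ≤ |2*j| := by rcases abs_cases (2*j) with ⟨h',_⟩|⟨h',_⟩ <;> omega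
  have h2' : |2*j| ≤ 2*(k:ℤ) - 2 := by rcases abs_cases (2*j) with ⟨h',_⟩|⟨h',_⟩ <;> omega
  have hM2 : (2:ℝ) ≤ |((2*j : ℤ):ℝ)| := by
    rw [← Int.cast_abs]; exact_mod_cast h2
  have hM2' : |((2*j : ℤ):ℝ)| ≤ 2*(k:ℝ) - 2 := by
    have h' : ((|2*j| : ℤ):ℝ) ≤ ((2*(k:ℤ) - 2 : ℤ):ℝ) := by exact_mod_cast h2'
    push_cast at h' ⊢; linarith
  have e1 : |((2*j : ℤ):ℝ)/(2*k)| = |((2*j : ℤ):ℝ)|/(2*(k:ℝ)) := by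
    rw [abs_div, abs_of_pos h2k]
  rw [e1, le_min_iff]
  have e2 : 1 - |((2*j : ℤ):ℝ)|/(2*(k:ℝ)) = (2*k - |((2*j : ℤ):ℝ)|)/(2*(k:ℝ)) := by
    field_simp
  constructor
  · rw [e2, div_le_div_iff₀ hk0 h2k]; nlinarith
  · rw [div_le_div_iff₀ hk0 h2k]; nlinarith

lemma bound_odd (k : ℕ) (hk : 1 ≤ k) (m : ℤ) (hmo : Odd m) (h : |m| ≤ 2*k - 1) :
    (1:ℝ)/(2*k) ≤ min (1 - |(m:ℝ)/(2*k)|) |(m:ℝ)/(2*k)| := by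
  have hk0 : (0:ℝ) < k := by exact_mod_cast hk
  have h2k : (0:ℝ) < 2*k := by linarith
  have h1 : (1:ℤ) ≤ |m| := by rcases hmo with ⟨j, hj⟩; rcases abs_cases m with ⟨h',_⟩|⟨h',_⟩ <;> omega
  have hM1 : (1:ℝ) ≤ |(m:ℝ)| := by rw [← Int.cast_abs]; exact_mod_cast h1
  have hM1' : |(m:ℝ)| ≤ 2*(k:ℝ) - 1 := by
    have h' : ((|m| : ℤ):ℝ) ≤ ((2*(k:ℤ) - 1 : ℤ):ℝ) := by exact_mod_cast h
    push_cast at h' ⊢; linarith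
  have e1 : |(m:ℝ)/(2*k)| = |(m:ℝ)|/(2*(k:ℝ)) := by rw [abs_div, abs_of_pos h2k]
  rw [e1, le_min_iff]
  have e2 : 1 - |(m:ℝ)|/(2*(k:ℝ)) = (2*k - |(m:ℝ)|)/(2*(k:ℝ)) := by field_simp
  constructor
  · rw [e2, div_le_div_iff₀ h2k h2k]; nlinarith
  · rw [div_le_div_iff₀ h2k h2k]; nlinarith

noncomputable def W1 (p : ℝ × ℝ) : ℝ := 2 * Int.fract ((p.1 + p.2 - ⌊p.1 - p.2⌋)/2)
noncomputable def W2 (p : ℝ × ℝ) : ℝ := Int.fract (p.1 - p.2)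

lemma W1_bounds (p : ℝ × ℝ) : 0 ≤ W1 p ∧ W1 p < 2 := by
  unfold W1
  constructor
  · have := Int.fract_nonneg ((p.1 + p.2 - ⌊p.1 - p.2⌋)/2); linarith
  · have := Int.fract_lt_one ((p.1 + p.2 - ⌊p.1 - p.2⌋)/2); linarith

lemma W2_bounds (p : ℝ × ℝ) : 0 ≤ W2 p ∧ W2 p < 1 :=
  ⟨Int.fract_nonneg _, Int.fract_lt_one _⟩

lemma W_decomp (p q : ℝ × ℝ) : ∃ r s : ℤ,
    (p.1 - q.1) - r = (W1 p - W1 q + (W2 p - W2 q))/2 ∧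
    (p.2 - q.2) - s = (W1 p - W1 q - (W2 p - W2 q))/2 := by
  refine ⟨(⌊p.1-p.2⌋ - ⌊q.1-q.2⌋) + (⌊(p.1+p.2-⌊p.1-p.2⌋)/2⌋ - ⌊(q.1+q.2-⌊q.1-q.2⌋)/2⌋),
    ⌊(p.1+p.2-⌊p.1-p.2⌋)/2⌋ - ⌊(q.1+q.2-⌊q.1-q.2⌋)/2⌋, ?_, ?_⟩ <;>
  · simp only [W1, W2, Int.fract]; push_cast; ring

theorem stmt_12 (k : ℕ) (hk : 2 ≤ k) :
    IsGreatest
      {m : ℕ | ∃ C : Finset (ℝ × ℝ),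
        (∀ x ∈ C, x.1 ∈ Set.Ico (0 : ℝ) 1 ∧ x.2 ∈ Set.Ico (0 : ℝ) 1) ∧
        C.card = m ∧
        ∀ u ∈ C, ∀ v ∈ C, u ≠ v →
          (1 : ℝ) / k ≤ min (1 - |u.1 - v.1|) |u.1 - v.1|
              + min (1 - |u.2 - v.2|) |u.2 - v.2|}
      (2 * k ^ 2) := by
  have hk1 : 1 ≤ k := by omega
  have hk0 : (0:ℝ) < k := by exact_mod_cast hk1
  have h2k : (0:ℝ) < 2*k := by linarith
  constructor
  · -- membership: construction
    set g : ℕ × ℕ × ℕ → ℝ × ℝ := fun t =>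
      (((2*t.1 + t.2.2 : ℕ) : ℝ)/(2*k), ((2*t.2.1 + t.2.2 : ℕ) : ℝ)/(2*k)) with hg
    set S := (Finset.range k) ×ˢ (Finset.range k) ×ˢ (Finset.range 2) with hS
    refine ⟨S.image g, ?_, ?_, ?_⟩
    · rintro x hx
      simp only [Finset.mem_image] at hx
      obtain ⟨⟨a, b, e⟩, ht, rfl⟩ := hx
      simp only [hS, Finset.mem_product, Finset.mem_range] at ht
      obtain ⟨ha, hb, he⟩ := ht
      constructor
      · exact ⟨by positivity, by rw [div_lt_one h2k]; exact_mod_cast (by omega : 2*a+e < 2*k)⟩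
      · exact ⟨by positivity, by rw [div_lt_one h2k]; exact_mod_cast (by omega : 2*b+e < 2*k)⟩
    · rw [Finset.card_image_of_injOn, hS]
      · simp [Finset.card_product]; ring
      · rintro ⟨a, b, e⟩ ht ⟨a', b', e'⟩ ht' heq
        simp only [hS, Finset.mem_coe, Finset.mem_product, Finset.mem_range] at ht ht'
        simp only [hg, Prod.mk.injEq] at heq
        obtain ⟨h1, h2⟩ := heq
        have key : ∀ x y : ℕ, ((x:ℝ))/(2*k) = (y:ℝ)/(2*k) → x = y := by
          intro x y hxy
          rw [div_eq_div_iff (ne_of_gt h2k) (ne_of_gt h2k)] at hxy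
          have : (x:ℝ) = y := mul_right_cancel₀ (ne_of_gt h2k) hxy
          exact_mod_cast this
        have h1' := key _ _ h1
        have h2' := key _ _ h2
        obtain ⟨hta, htb, hte⟩ := ht
        obtain ⟨hta', htb', hte'⟩ := ht'
        have : a = a' ∧ b = b' ∧ e = e' := by omega
        simp [this.1, this.2.1, this.2.2]
    · rintro u hu v hv huv
      simp only [Finset.mem_image] at hu hv
      obtain ⟨⟨a, b, e⟩, ht, rfl⟩ := hu
      obtain ⟨⟨a', b', e'⟩, ht', rfl⟩ := hv
      simp only [hS, Finset.mem_product, Finset.mem_range] at ht ht'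
      obtain ⟨ha, hb, he⟩ := ht
      obtain ⟨ha', hb', he'⟩ := ht'
      set m : ℤ := (2*a + e : ℤ) - (2*a' + e' : ℤ) with hm
      set n : ℤ := (2*b + e : ℤ) - (2*b' + e' : ℤ) with hn
      have heq1 : (g (a,b,e)).1 - (g (a',b',e')).1 = (m:ℝ)/(2*k) := by
        rw [hm]; simp only [hg]; push_cast; ring
      have heq2 : (g (a,b,e)).2 - (g (a',b',e')).2 = (n:ℝ)/(2*k) := by
        rw [hn]; simp only [hg]; push_cast; ring
      have hmb : |m| ≤ 2*(k:ℤ) - 1 := by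
        rcases abs_cases m with ⟨h',_⟩|⟨h',_⟩ <;> omega
      have hnb : |n| ≤ 2*(k:ℤ) - 1 := by
        rcases abs_cases n with ⟨h',_⟩|⟨h',_⟩ <;> omega
      rw [heq1, heq2]
      by_cases hee : e = e'
      · -- even case
        have hmn : m ≠ 0 ∨ n ≠ 0 := by
          by_contra hcon
          push_neg at hcon
          apply huv
          have : a = a' ∧ b = b' := by omega
          simp [hg, this.1, this.2, hee]
        have hme : 2 ∣ m := by omega
        have hne : 2 ∣ n := by omega
        rcases hmn with h0 | h0
        · have := bound_even k hk1 m h0 hme hmb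
          have := bound_nonneg k hk1 n hnb
          linarith
        · have := bound_even k hk1 n h0 hne hnb
          have := bound_nonneg k hk1 m hmb
          linarith
      · -- odd case
        have hmo : Odd m := by rw [Int.odd_iff]; omega
        have hno : Odd n := by rw [Int.odd_iff]; omega
        have := bound_odd k hk1 m hmo hmb
        have := bound_odd k hk1 n hno hnb
        have : (1:ℝ)/k = 1/(2*k) + 1/(2*k) := by field_simp; ring
        linarith
  · -- upper bound
    rintro N ⟨C, hC, rfl, hdist⟩
    have hcard : ((Finset.Ico (0:ℤ) (2*k)) ×ˢ (Finset.Ico (0:ℤ) (k:ℤ))).card = 2*k^2 := by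
      rw [Finset.card_product, Int.card_Ico, Int.card_Ico]
      have e1 : (2*(k:ℤ) - 0).toNat = 2*k := by omega
      have e2 : ((k:ℤ) - 0).toNat = k := by omega
      rw [e1, e2]; ring
    have hmaps : ∀ p ∈ C, ((⌊(k:ℝ) * W1 p⌋, ⌊(k:ℝ) * W2 p⌋) : ℤ × ℤ) ∈
        (Finset.Ico (0:ℤ) (2*k)) ×ˢ (Finset.Ico (0:ℤ) (k:ℤ)) := by
      intro p _
      obtain ⟨w1a, w1b⟩ := W1_bounds p
      obtain ⟨w2a, w2b⟩ := W2_bounds p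
      simp only [Finset.mem_product, Finset.mem_Ico]
      refine ⟨⟨Int.floor_nonneg.mpr (by positivity), Int.floor_lt.mpr ?_⟩,
        Int.floor_nonneg.mpr (by positivity), Int.floor_lt.mpr ?_⟩
      · push_cast; nlinarith
      · push_cast; nlinarith
    have hinj : Set.InjOn (fun p : ℝ × ℝ => ((⌊(k:ℝ) * W1 p⌋, ⌊(k:ℝ) * W2 p⌋) : ℤ × ℤ)) C := by
      intro p hp q hq hfq
      by_contra hne
      have hd := hdist p hp q hq hne
      simp only [Prod.mk.injEq] at hfq
      have h1 := Int.abs_sub_lt_one_of_floor_eq_floor hfq.1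
      have h2 := Int.abs_sub_lt_one_of_floor_eq_floor hfq.2
      rw [← mul_sub, abs_mul, abs_of_pos hk0] at h1 h2
      have hX : |W1 p - W1 q| < 1/k := by rw [lt_div_iff₀ hk0]; linarith
      have hY : |W2 p - W2 q| < 1/k := by rw [lt_div_iff₀ hk0]; linarith
      obtain ⟨r, s, hr, hs⟩ := W_decomp p q
      obtain ⟨⟨hp1, hp2⟩, hp3, hp4⟩ := hC p hp
      obtain ⟨⟨hq1, hq2⟩, hq3, hq4⟩ := hC q hq
      have habs_a : |p.1 - q.1| < 1 := by
        rcases abs_cases (p.1 - q.1) with ⟨h',_⟩|⟨h',_⟩ <;> linarith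
      have habs_b : |p.2 - q.2| < 1 := by
        rcases abs_cases (p.2 - q.2) with ⟨h',_⟩|⟨h',_⟩ <;> linarith
      have d1 := distZ_le (p.1 - q.1) habs_a r
      have d2 := distZ_le (p.2 - q.2) habs_b s
      set X := W1 p - W1 q with hXdef
      set Y := W2 p - W2 q with hYdef
      have e1 : |p.1 - q.1 - r| = |X + Y|/2 := by rw [hr, abs_div]; norm_num
      have e2 : |p.2 - q.2 - s| = |X - Y|/2 := by rw [hs, abs_div]; norm_num
      have hX' := abs_lt.mp hX
      have hY' := abs_lt.mp hY
      have key : |X + Y| + |X - Y| < 2/k := by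
        have h2k' : 2/(k:ℝ) = 1/k + 1/k := by ring
        rcases abs_cases (X+Y) with ⟨ha1,_⟩|⟨ha1,_⟩ <;>
          rcases abs_cases (X-Y) with ⟨ha2,_⟩|⟨ha2,_⟩ <;>
          rw [ha1, ha2, h2k'] <;> linarith
      have final : (1:ℝ)/k < 1/k := by
        have : 2/(k:ℝ)/2 = 1/k := by ring
        calc (1:ℝ)/k ≤ _ + _ := hd
          _ ≤ |p.1 - q.1 - (r:ℝ)| + |p.2 - q.2 - (s:ℝ)| := by linarith
          _ = (|X + Y| + |X - Y|)/2 := by rw [e1, e2]; ring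
          _ < 2/(k:ℝ)/2 := by linarith
          _ = 1/k := this
      exact absurd final (lt_irrefl _)
    calc C.card ≤ ((Finset.Ico (0:ℤ) (2*k)) ×ˢ (Finset.Ico (0:ℤ) (k:ℤ))).card :=
          Finset.card_le_card_of_injOn _ hmaps hinj
      _ = 2*k^2 := hcard
end

section
/- For a Q-ary alphabet with Hamming distance and any 0 < δ < (Q−1)/Q, the maximal code rate satisfies R*_n(δ) = (1/n) log M*_n(nδ) ≥ D(δ ‖ (Q−1)/Q) for every n such that nδ is a positive integer. -/
theorem stmt_17 {α : Type*} [Fintype α] [DecidableEq α]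
    (Q : ℕ) (hQ : Fintype.card α = Q) (hQ2 : 2 ≤ Q)
    (δ : ℝ) (hδ0 : 0 < δ) (hδ1 : δ < (Q - 1) / Q)
    (n d : ℕ) (hn : 0 < n) (hd : (d : ℝ) = n * δ) (hd0 : 0 < d) :
    δ * Real.log (δ / ((Q - 1) / Q))
        + (1 - δ) * Real.log ((1 - δ) / (1 / Q))
      ≤ (1 / n : ℝ) * Real.log
          (sSup {m : ℕ | ∃ C : Finset (Fin n → α), C.card = m ∧
            ∀ u ∈ C, ∀ v ∈ C, u ≠ v → d ≤ hammingDist u v} : ℕ) := by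
  set S : Set ℕ := {m : ℕ | ∃ C : Finset (Fin n → α), C.card = m ∧
            ∀ u ∈ C, ∀ v ∈ C, u ≠ v → d ≤ hammingDist u v} with hS
  have hQR : (2:ℝ) ≤ (Q:ℝ) := by exact_mod_cast hQ2
  have hQ0 : (0:ℝ) < (Q:ℝ) := by linarith
  have hQ1 : (0:ℝ) < (Q:ℝ) - 1 := by linarith
  have hδ1' : δ < 1 := lt_of_lt_of_le hδ1 (by rw [div_le_one hQ0]; linarith)
  have h1δ : (0:ℝ) < 1 - δ := by linarith
  set t : ℝ := δ / ((1 - δ) * ((Q:ℝ) - 1)) with ht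
  have ht0 : 0 < t := div_pos hδ0 (mul_pos h1δ hQ1)
  have ht1 : t ≤ 1 := by
    rw [ht, div_le_one (mul_pos h1δ hQ1)]
    have hq : δ * Q < (Q:ℝ) - 1 := (lt_div_iff₀ hQ0).mp hδ1
    nlinarith
  -- S is nonempty and bounded above
  have h0S : 0 ∈ S := ⟨∅, rfl, by simp⟩
  have hbdd : BddAbove S := ⟨Fintype.card (Fin n → α), fun m hm => by
    obtain ⟨C, hC, -⟩ := hm
    exact hC ▸ Finset.card_le_univ C⟩
  obtain ⟨C, hCcard, hCdist⟩ := Nat.sSup_mem ⟨0, h0S⟩ hbdd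
  -- maximality : every point is within distance < d of some codeword
  have hcover : ∀ x : Fin n → α, ∃ c ∈ C, hammingDist x c < d := by
    intro x
    by_contra h
    push_neg at h
    have hxC : x ∉ C := by
      intro hx
      have := h x hx
      rw [hammingDist_self] at this
      omega
    have hmemS : sSup S + 1 ∈ S := by
      refine ⟨insert x C, ?_, ?_⟩
      · rw [Finset.card_insert_of_notMem hxC, hCcard]
      · intro u hu v hv huv
        rw [Finset.mem_insert] at hu hv
        rcases hu with rfl | hu <;> rcases hv with rfl | hv
        · exact absurd rfl huv
        · exact h v hv
        · rw [hammingDist_comm]; exact h u hu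
        · exact hCdist u hu v hv huv
    have := le_csSup hbdd hmemS
    omega
  -- counting : space is covered by balls
  have hcount : Fintype.card (Fin n → α)
      ≤ ∑ c ∈ C, ({x : Fin n → α | hammingDist x c < d} : Finset _).card := by
    have hsub : (Finset.univ : Finset (Fin n → α)) ⊆
        C.biUnion (fun c => ({x : Fin n → α | hammingDist x c < d} : Finset _)) := by
      intro x _
      obtain ⟨c, hc, hdist⟩ := hcover x
      exact Finset.mem_biUnion.mpr ⟨c, hc, by simpa using hdist⟩
    calc Fintype.card (Fin n → α) = (Finset.univ : Finset (Fin n → α)).card :=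
          (Finset.card_univ).symm
      _ ≤ _ := Finset.card_le_card hsub
      _ ≤ _ := Finset.card_biUnion_le
  -- sum identity
  have hsumid : ∀ c : Fin n → α,
      ∑ x : Fin n → α, t ^ hammingDist x c = (1 + ((Q:ℝ) - 1) * t) ^ n := by
    intro c
    have hterm : ∀ x : Fin n → α,
        t ^ hammingDist x c = ∏ i, (if x i = c i then (1:ℝ) else t) := by
      intro x
      rw [Finset.prod_ite, Finset.prod_const, Finset.prod_const, one_pow, one_mul]
      congr 1
    have hcoord : ∀ b : α, ∑ a : α, (if a = b then (1:ℝ) else t) = 1 + ((Q:ℝ) - 1) * t := by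
      intro b
      have h1 : ∀ a : α, (if a = b then (1:ℝ) else t) = t + (if a = b then 1 - t else 0) := by
        intro a; split <;> ring
      simp_rw [h1, Finset.sum_add_distrib, Finset.sum_const, Finset.sum_ite_eq',
        Finset.mem_univ, if_true, Finset.card_univ, hQ, nsmul_eq_mul]
      ring
    calc ∑ x : Fin n → α, t ^ hammingDist x c
        = ∑ x : Fin n → α, ∏ i, (if x i = c i then (1:ℝ) else t) := by
          exact Finset.sum_congr rfl fun x _ => hterm x
      _ = ∏ i : Fin n, ∑ a : α, (if a = c i then (1:ℝ) else t) := by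
          rw [Finset.prod_univ_sum]
          rw [Fintype.piFinset_univ]
      _ = ∏ i : Fin n, (1 + ((Q:ℝ) - 1) * t) := Finset.prod_congr rfl fun i _ => hcoord (c i)
      _ = (1 + ((Q:ℝ) - 1) * t) ^ n := by rw [Finset.prod_const, Finset.card_univ,
          Fintype.card_fin]
  -- ball volume bound
  have htd : (0:ℝ) < t ^ d := pow_pos ht0 d
  have hball : ∀ c : Fin n → α,
      ((({x : Fin n → α | hammingDist x c < d} : Finset _)).card : ℝ) * t ^ d
        ≤ (1 + ((Q:ℝ) - 1) * t) ^ n := by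
    intro c
    calc ((({x : Fin n → α | hammingDist x c < d} : Finset _)).card : ℝ) * t ^ d
        = ∑ _x ∈ ({x : Fin n → α | hammingDist x c < d} : Finset _), t ^ d := by
          rw [Finset.sum_const, nsmul_eq_mul]
      _ ≤ ∑ x ∈ ({x : Fin n → α | hammingDist x c < d} : Finset _), t ^ hammingDist x c := by
          refine Finset.sum_le_sum fun x hx => ?_
          have hxd : hammingDist x c ≤ d := le_of_lt (by simpa using hx)
          exact pow_le_pow_of_le_one ht0.le ht1 hxd
      _ ≤ ∑ x : Fin n → α, t ^ hammingDist x c :=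
          Finset.sum_le_sum_of_subset_of_nonneg (Finset.filter_subset _ _)
            (fun _ _ _ => pow_nonneg ht0.le _)
      _ = _ := hsumid c
  -- main counting inequality in ℝ
  set M : ℕ := sSup S with hM
  have hmain : ((Q:ℝ)) ^ n ≤ (M : ℝ) * ((1 + ((Q:ℝ) - 1) * t) ^ n / t ^ d) := by
    have h1 : ((Q:ℝ)) ^ n ≤ ∑ c ∈ C,
        ((({x : Fin n → α | hammingDist x c < d} : Finset _)).card : ℝ) := by
      have := hcount
      have hcd : Fintype.card (Fin n → α) = Q ^ n := by
        rw [Fintype.card_fun, Fintype.card_fin, hQ]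
      rw [hcd] at this
      exact_mod_cast this
    calc ((Q:ℝ)) ^ n ≤ ∑ c ∈ C,
          ((({x : Fin n → α | hammingDist x c < d} : Finset _)).card : ℝ) := h1
      _ ≤ ∑ _c ∈ C, (1 + ((Q:ℝ) - 1) * t) ^ n / t ^ d := by
          refine Finset.sum_le_sum fun c _ => ?_
          rw [le_div_iff₀ htd]
          exact hball c
      _ = (C.card : ℝ) * ((1 + ((Q:ℝ) - 1) * t) ^ n / t ^ d) := by
          rw [Finset.sum_const, nsmul_eq_mul]
      _ = (M : ℝ) * ((1 + ((Q:ℝ) - 1) * t) ^ n / t ^ d) := by rw [hCcard]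
  have hB : 1 + ((Q:ℝ) - 1) * t = 1 / (1 - δ) := by
    rw [ht]; field_simp; ring
  have h1n : (0:ℝ) < (1 - δ) ^ n := pow_pos h1δ n
  have hMlow : (Q:ℝ) ^ n * t ^ d * (1 - δ) ^ n ≤ (M : ℝ) := by
    rw [hB] at hmain
    have hkey : ((1:ℝ) / (1 - δ)) ^ n / t ^ d * (t ^ d * (1 - δ) ^ n) = 1 := by
      field_simp; rw [← mul_pow, one_div_mul_cancel h1δ.ne', one_pow]
    have := mul_le_mul_of_nonneg_right hmain (le_of_lt (mul_pos htd h1n))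
    calc (Q:ℝ) ^ n * t ^ d * (1 - δ) ^ n = (Q:ℝ) ^ n * (t ^ d * (1 - δ) ^ n) := by ring
      _ ≤ (M : ℝ) * (((1:ℝ) / (1 - δ)) ^ n / t ^ d) * (t ^ d * (1 - δ) ^ n) := this
      _ = (M : ℝ) * (((1:ℝ) / (1 - δ)) ^ n / t ^ d * (t ^ d * (1 - δ) ^ n)) := by ring
      _ = (M : ℝ) := by rw [hkey, mul_one]
  have hQTpos : (0:ℝ) < (Q:ℝ) ^ n * t ^ d * (1 - δ) ^ n :=
    mul_pos (mul_pos (pow_pos hQ0 n) htd) h1n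
  have hMpos : (0:ℝ) < (M : ℝ) := lt_of_lt_of_le hQTpos hMlow
  have hlog : Real.log ((Q:ℝ) ^ n * t ^ d * (1 - δ) ^ n) ≤ Real.log (M : ℝ) :=
    Real.log_le_log hQTpos hMlow
  have hnpos : (0:ℝ) < (n:ℝ) := by exact_mod_cast hn
  rw [show (1 / (n:ℝ)) * Real.log (M:ℝ) = Real.log (M:ℝ) / (n:ℝ) from by ring,
      le_div_iff₀ hnpos]
  refine le_trans (le_of_eq ?_) hlog
  rw [Real.log_mul (by positivity) (by positivity),
      Real.log_mul (by positivity) (by positivity),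
      Real.log_pow, Real.log_pow, Real.log_pow, ht,
      Real.log_div hδ0.ne' (mul_pos h1δ hQ1).ne',
      Real.log_mul h1δ.ne' hQ1.ne',
      Real.log_div hδ0.ne' (div_pos hQ1 hQ0).ne',
      Real.log_div hQ1.ne' hQ0.ne',
      Real.log_div h1δ.ne' (one_div_pos.mpr hQ0).ne',
      Real.log_div one_ne_zero hQ0.ne', Real.log_one, hd]
  ring
end
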